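/- Let A be a multiset of positive integers with sum S divisible by 3, r = S mod 2, and A' = A ∪ {2S/3+r+1, 2S/3+r+1, 2S/3+r+1}. If I ⊆ A has sum S/3, then the following allocation is a valid balanced fractional packing of A' into 4 bins of capacity S'/4 = 3(S+r+1)/4, each object split across at most 3 bins: bin 1 gets 1/4 of every element of A'; bin 2 gets 3/4 of every element of I ∪ {2S/3+r+1}; bins 3 and 4 each get 3/8 of every element of (A∖I) ∪ {2S/3+r+1, 2S/3+r+1}. -/

import Mathlib

open scoped Classical

/-- Explicit allocation for the k = 3 reduction: if `I ⊆ A` has sum `S/3` (with `S`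
divisible by 3, `r = S % 2`, `b = 2S/3+r+1`, `A' = A + {b,b,b}`), then `A'` admits a
balanced fractional packing into 4 bins of capacity `S'/4 = 3(S+r+1)/4`, each object
split across at most 3 bins: bin 1 gets `1/4` of every element of `A'`; bin 2 gets `3/4`
of every element of `I ∪ {b}`; bins 3 and 4 each get `3/8` of every element of
`(A \ I) ∪ {b, b}`; and every bin is filled to exactly the capacity. -/
theorem explicit_four_bin_packing
    (A : Multiset ℕ) (hpos : ∀ x ∈ A, 0 < x) (S : ℕ) (hS : S = A.sum)
    (hdvd : 3 ∣ S)
    (r : ℕ) (hr : r = S % 2)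
    (b : ℕ) (hb : b = 2 * (S / 3) + r + 1)
    (A' : Multiset ℕ) (hA' : A' = A + {b, b, b})
    (I : Multiset ℕ) (hI : I ≤ A) (hIsum : 3 * I.sum = S) :
    ∃ (N : ℕ) (a : Fin N → ℕ) (lam : Fin N → Fin 4 → ℝ) (J : Finset (Fin N)),
      (↑(List.ofFn a) : Multiset ℕ) = A' ∧
      Multiset.map a J.val = I + {b} ∧
      Multiset.map a Jᶜ.val = (A - I) + {b, b} ∧
      (∀ i, lam i 0 = 1 / 4) ∧
      (∀ i ∈ J, lam i 1 = 3 / 4 ∧ lam i 2 = 0 ∧ lam i 3 = 0) ∧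
      (∀ i ∉ J, lam i 1 = 0 ∧ lam i 2 = 3 / 8 ∧ lam i 3 = 3 / 8) ∧
      (∀ i, ∑ j, lam i j = 1) ∧
      (∀ i, (Finset.univ.filter (fun j => lam i j ≠ 0)).card ≤ 3) ∧
      (∀ j, ∑ i, (a i : ℝ) * lam i j = 3 * ((S : ℝ) + r + 1) / 4) := by
  classical
  set s := I.sum with hs
  have hSs : S = 3 * s := hIsum.symm
  have hA_eq : I + (A - I) = A := add_tsub_cancel_of_le hI
  have hAI_sum : I.sum + (A - I).sum = A.sum := by
    rw [← Multiset.sum_add, hA_eq]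
  have hbval : b = 2 * s + r + 1 := by
    rw [hb, hSs, Nat.mul_div_cancel_left _ (by norm_num)]
  set L1 := (I + {b}).toList with hL1
  set L2 := (A - I + {b, b}).toList with hL2
  set n1 := L1.length with hn1
  set n2 := L2.length with hn2
  set a : Fin (n1 + n2) → ℕ := Fin.append L1.get L2.get with ha
  set J : Finset (Fin (n1 + n2)) := Finset.univ.filter (fun i => (i : ℕ) < n1) with hJdef
  have hofn : List.ofFn a = L1 ++ L2 := by
    rw [ha, List.ofFn_fin_append, List.ofFn_get, List.ofFn_get]
  have hJmap : J = Finset.map (Fin.castAddEmb n2) Finset.univ := by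
    ext i
    simp only [hJdef, Finset.mem_filter, Finset.mem_univ, true_and, Finset.mem_map,
      Fin.castAddEmb, 
      Function.Embedding.coeFn_mk]
    constructor
    · intro h
      exact ⟨⟨i, h⟩, by ext; simp [Fin.castAdd]⟩
    · rintro ⟨j, rfl⟩
      simpa using j.isLt
  have hJcmap : Jᶜ = Finset.map (Fin.natAddEmb n1) Finset.univ := by
    ext i
    simp only [hJdef, Finset.mem_compl, Finset.mem_filter, Finset.mem_univ, true_and,
      Finset.mem_map, Fin.natAddEmb, 
      Function.Embedding.coeFn_mk, not_lt]
    constructor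
    · intro h
      refine ⟨⟨(i : ℕ) - n1, by omega⟩, ?_⟩
      ext; change n1 + ((i : ℕ) - n1) = (i : ℕ); omega
    · rintro ⟨j, rfl⟩
      change n1 ≤ n1 + (j : ℕ); omega
  have hmapJ : Multiset.map a J.val = I + {b} := by
    rw [hJmap]
    rw [Finset.map_val, Multiset.map_map]
    have : a ∘ (Fin.castAddEmb n2) = L1.get := by
      funext j
      exact Fin.append_left _ _ j
    rw [this, Fin.univ_val_map, List.ofFn_get, hL1, Multiset.coe_toList]
  have hmapJc : Multiset.map a Jᶜ.val = (A - I) + {b, b} := by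
    rw [hJcmap]
    rw [Finset.map_val, Multiset.map_map]
    have : a ∘ (Fin.natAddEmb n1) = L2.get := by
      funext j
      exact Fin.append_right _ _ j
    rw [this, Fin.univ_val_map, List.ofFn_get, hL2, Multiset.coe_toList]
  set v1 : Fin 4 → ℝ := ![1/4, 3/4, 0, 0] with hv1
  set v2 : Fin 4 → ℝ := ![1/4, 0, 3/8, 3/8] with hv2
  set lam : Fin (n1 + n2) → Fin 4 → ℝ := fun i => if i ∈ J then v1 else v2 with hlam
  have hsumJ : ∑ i ∈ J, (a i : ℝ) = (s : ℝ) + b := by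
    have : ∑ i ∈ J, (a i : ℝ) = ((Multiset.map a J.val).map (fun n : ℕ => (n : ℝ))).sum := by
      rw [Multiset.map_map]; rfl
    rw [this, hmapJ]
    push_cast [Multiset.sum_map_singleton]
    simp [hs]
  have hsumJc : ∑ i ∈ Jᶜ, (a i : ℝ) = ((A - I).sum : ℝ) + 2 * b := by
    have : ∑ i ∈ Jᶜ, (a i : ℝ) = ((Multiset.map a Jᶜ.val).map (fun n : ℕ => (n : ℝ))).sum := by
      rw [Multiset.map_map]; rfl
    rw [this, hmapJc]
    push_cast
    ring_nf
    simp [Multiset.sum_map_singleton]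
    ring
  have hAIs : ((A - I).sum : ℝ) = 2 * s := by
    have : (A - I).sum = 2 * s := by omega
    rw [this]; push_cast; ring
  refine ⟨n1 + n2, a, lam, J, ?_, hmapJ, hmapJc, ?_, ?_, ?_, ?_, ?_, ?_⟩
  · rw [hofn]
    have : ((L1 ++ L2 : List ℕ) : Multiset ℕ) = (↑L1 : Multiset ℕ) + ↑L2 := by
      simp
    rw [this, hL1, hL2, Multiset.coe_toList, Multiset.coe_toList, hA']
    have hbbb : ({b} : Multiset ℕ) + {b, b} = {b, b, b} := rfl
    calc I + {b} + (A - I + {b, b}) = (I + (A - I)) + ({b} + {b, b}) := add_add_add_comm _ _ _ _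
      _ = A + {b, b, b} := by rw [hA_eq, hbbb]
  · intro i
    by_cases h : i ∈ J <;> simp [hlam, h, hv1, hv2]
  · intro i hi
    simp [hlam, hi, hv1]
  · intro i hi
    simp [hlam, hi, hv2]
  · intro i
    by_cases h : i ∈ J <;>
      simp [hlam, h, hv1, hv2, Fin.sum_univ_four] <;> norm_num
  · intro i
    by_cases h : i ∈ J
    · have : (Finset.univ.filter (fun j => lam i j ≠ 0)) = {0, 1} := by
        ext j
        fin_cases j <;> simp [hlam, h, hv1] <;> norm_num
      rw [this]; decide
    · have : (Finset.univ.filter (fun j => lam i j ≠ 0)) = {0, 2, 3} := by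
        ext j
        fin_cases j <;> simp [hlam, h, hv2] <;> norm_num
      rw [this]; decide
  · intro j
    have hsplit : ∑ i, (a i : ℝ) * lam i j
        = ∑ i ∈ J, (a i : ℝ) * lam i j + ∑ i ∈ Jᶜ, (a i : ℝ) * lam i j :=
      (Finset.sum_add_sum_compl J _).symm
    have h1 : ∑ i ∈ J, (a i : ℝ) * lam i j = v1 j * ((s : ℝ) + b) := by
      rw [← hsumJ, Finset.mul_sum]
      refine Finset.sum_congr rfl fun i hi => ?_
      simp [hlam, hi]; ring
    have h2 : ∑ i ∈ Jᶜ, (a i : ℝ) * lam i j = v2 j * (((A - I).sum : ℝ) + 2 * b) := by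
      rw [← hsumJc, Finset.mul_sum]
      refine Finset.sum_congr rfl fun i hi => ?_
      have : i ∉ J := by simpa using hi
      simp [hlam, this]; ring
    rw [hsplit, h1, h2, hAIs]
    have hbR : (b : ℝ) = 2 * s + r + 1 := by rw [hbval]; push_cast; ring
    have hSR : (S : ℝ) = 3 * s := by rw [hSs]; push_cast; ring
    rw [hbR, hSR]
    fin_cases j <;> simp [hv1, hv2] <;> ring
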